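/- Let f : ℝ^d → ℝ^m be differentiable with Jacobian of full column rank everywhere, let h(s) = (h_1(s_1),…,h_d(s_d)) be a differentiable invertible element-wise map with everywhere nonzero derivatives, and let P be a d×d permutation matrix. Then for f̃ = f ∘ h^{-1} ∘ P^{-1} and s̃ = P·h(s), the local IMA contrast satisfies c(J_{f̃}(s̃)) = c(J_f(s)), where c(J) := Σ_i log‖J_{:,i}‖ − (1/2)log det(JᵀJ). -/

import Mathlib

open Matrix

open scoped BigOperators

/-- The local IMA contrast of a matrix `J ∈ ℝ^{m×d}`:
`∑ i log‖J_{:,i}‖ − (1/2) log det(JᵀJ)`. -/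
noncomputable def imaContrast {m d : ℕ} (J : Matrix (Fin m) (Fin d) ℝ) : ℝ :=
  (∑ i, Real.log (Real.sqrt (∑ r, (J r i) ^ 2))) -
    (1 / 2) * Real.log (Jᵀ * J).det

/-- The Jacobian matrix of a map `g : ℝ^d → ℝ^m` at a point `s`. -/
noncomputable def jacobianMatrix {d m : ℕ} (g : (Fin d → ℝ) → (Fin m → ℝ))
    (s : Fin d → ℝ) : Matrix (Fin m) (Fin d) ℝ :=
  fun r i => fderiv ℝ g s (Pi.single i 1) r


lemma gram_det_pos {m d : ℕ} (A : Matrix (Fin m) (Fin d) ℝ)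
    (h : LinearIndependent ℝ (fun i : Fin d => fun r : Fin m => A r i)) :
    0 < (Aᵀ * A).det := by
  have hinj : ∀ x : Fin d → ℝ, A *ᵥ x = 0 → x = 0 := by
    intro x hx
    have := Fintype.linearIndependent_iff.mp h x ?_
    · funext i; exact this i
    · funext r
      have := congrFun hx r
      simpa [Matrix.mulVec, dotProduct, Finset.sum_apply, mul_comm] using this
  have hpd : (Aᵀ * A).PosDef := by
    refine Matrix.posDef_iff_dotProduct_mulVec.2
      ⟨by simpa using Matrix.isHermitian_conjTranspose_mul_self A, fun x hx => ?_⟩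
    have hAx : A *ᵥ x ≠ 0 := fun h0 => hx (hinj x h0)
    have : star x ⬝ᵥ (Aᵀ * A) *ᵥ x = (A *ᵥ x) ⬝ᵥ (A *ᵥ x) := by
      rw [← Matrix.mulVec_mulVec, Matrix.dotProduct_mulVec, Matrix.vecMul_transpose]
      simp
    rw [this]
    have : (A *ᵥ x) ⬝ᵥ (A *ᵥ x) = ∑ r, (A *ᵥ x) r ^ 2 := by
      simp [dotProduct, sq]
    rw [this]
    have : ∃ r, (A *ᵥ x) r ≠ 0 := by
      by_contra hc; push_neg at hc; exact hAx (funext hc)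
    obtain ⟨r, hr⟩ := this
    exact Finset.sum_pos' (fun i _ => sq_nonneg _) ⟨r, Finset.mem_univ r, by positivity⟩
  exact hpd.det_pos



lemma jac_comp {d m : ℕ} (f : (Fin d → ℝ) → (Fin m → ℝ)) (hf : Differentiable ℝ f)
    (gfun : Fin d → ℝ → ℝ) (hdiffg : ∀ i, Differentiable ℝ (gfun i))
    (σ : Equiv.Perm (Fin d)) (t : Fin d → ℝ) (r : Fin m) (j : Fin d) :
    jacobianMatrix (fun x => f (fun i => gfun i (x (σ i)))) t r j =
      deriv (gfun (σ.symm j)) (t j) *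
        jacobianMatrix f (fun i => gfun i (t (σ i))) r (σ.symm j) := by
  set φ : (Fin d → ℝ) → (Fin d → ℝ) := fun x i => gfun i (x (σ i)) with hφ
  set L : (Fin d → ℝ) →L[ℝ] (Fin d → ℝ) :=
    ContinuousLinearMap.pi
      (fun i => (deriv (gfun i) (t (σ i))) • ContinuousLinearMap.proj (σ i)) with hL
  have hφd : HasFDerivAt φ L t := by
    rw [hL]
    apply hasFDerivAt_pi.2
    intro i
    have hg : HasDerivAt (gfun i) (deriv (gfun i) (t (σ i))) (t (σ i)) :=
      ((hdiffg i) (t (σ i))).hasDerivAt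
    have hp : HasFDerivAt (fun x : Fin d → ℝ => x (σ i))
        (ContinuousLinearMap.proj (σ i) : (Fin d → ℝ) →L[ℝ] ℝ) t := hasFDerivAt_apply (σ i) t
    exact hg.comp_hasFDerivAt t hp
  have hF : HasFDerivAt (fun x => f (φ x)) ((fderiv ℝ f (φ t)).comp L) t :=
    (hf (φ t)).hasFDerivAt.comp t hφd
  have hLs : L (Pi.single j 1) =
      deriv (gfun (σ.symm j)) (t j) • (Pi.single (σ.symm j) (1 : ℝ) : Fin d → ℝ) := by
    funext i
    rw [hL]
    simp only [ContinuousLinearMap.pi_apply, ContinuousLinearMap.smul_apply,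
      ContinuousLinearMap.proj_apply, Pi.smul_apply, smul_eq_mul]
    by_cases hi : i = σ.symm j
    · subst hi
      simp [Pi.single_apply]
    · have h1 : σ i ≠ j := fun hc => hi (by simp [← hc])
      simp [Pi.single_apply, h1, hi]
  have : jacobianMatrix (fun x => f (fun i => gfun i (x (σ i)))) t r j =
      (fderiv ℝ f (φ t)) (L (Pi.single j 1)) r := by
    rw [jacobianMatrix, hF.fderiv]; rfl
  rw [this, hLs, (fderiv ℝ f (φ t)).map_smul]
  simp [jacobianMatrix, hφ]



lemma imaContrast_scale_perm {m d : ℕ} (A : Matrix (Fin m) (Fin d) ℝ)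
    (hA : LinearIndependent ℝ (fun i : Fin d => fun r : Fin m => A r i))
    (c : Fin d → ℝ) (hc : ∀ j, c j ≠ 0) (σ : Equiv.Perm (Fin d)) :
    imaContrast (Matrix.of fun r j => c j * A r (σ.symm j)) = imaContrast A := by
  have hcolpos : ∀ i : Fin d, 0 < ∑ r, A r i ^ 2 := by
    intro i
    have hne : (fun r : Fin m => A r i) ≠ 0 := hA.ne_zero i
    have : ∃ r, A r i ≠ 0 := by
      by_contra hcon; push_neg at hcon
      exact hne (funext hcon)
    obtain ⟨r, hr⟩ := this
    exact Finset.sum_pos' (fun k _ => sq_nonneg _) ⟨r, Finset.mem_univ r, by positivity⟩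
  have hG : 0 < (Aᵀ * A).det := gram_det_pos A hA
  set J : Matrix (Fin m) (Fin d) ℝ := Matrix.of fun r j => c j * A r (σ.symm j) with hJ
  set M : Matrix (Fin d) (Fin d) ℝ := σ.permMatrix ℝ * Matrix.diagonal c with hM
  have hMe : ∀ i j, M i j = if i = σ.symm j then c j else 0 := by
    intro i j
    rw [hM, Matrix.mul_diagonal]
    simp only [Equiv.Perm.permMatrix, PEquiv.toMatrix_apply, Equiv.toPEquiv_apply,
      Option.mem_def, Option.some.injEq]
    have hiff : (i = σ.symm j) ↔ (σ i = j) := (Equiv.eq_symm_apply σ)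
    by_cases h : σ i = j
    · rw [if_pos h, if_pos (hiff.mpr h), one_mul]
    · rw [if_neg h, if_neg (fun hh => h (hiff.mp hh)), zero_mul]
  have hJM : J = A * M := by
    funext r j
    rw [hJ, Matrix.mul_apply]
    simp only [Matrix.of_apply, hMe, mul_ite, mul_zero,
      Finset.sum_ite_eq', Finset.mem_univ, if_true]
    ring
  have hdetM : M.det ^ 2 = (∏ j, c j) ^ 2 := by
    rw [hM, Matrix.det_mul, Matrix.det_permutation, Matrix.det_diagonal]
    rcases Int.units_eq_one_or (Equiv.Perm.sign σ) with h | h <;> rw [h] <;> push_cast <;> ring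
  have hdet : (Jᵀ * J).det = (∏ j, c j) ^ 2 * (Aᵀ * A).det := by
    rw [hJM, Matrix.transpose_mul, Matrix.mul_assoc, ← Matrix.mul_assoc Aᵀ A M,
      ← Matrix.mul_assoc, Matrix.det_mul, Matrix.det_mul, Matrix.det_transpose]
    rw [← hdetM]; ring
  have hprodne : (∏ j, c j) ≠ 0 := Finset.prod_ne_zero_iff.2 fun j _ => hc j
  -- log of determinant part
  have hlogdet : Real.log (Jᵀ * J).det =
      2 * ∑ j, Real.log |c j| + Real.log (Aᵀ * A).det := by
    rw [hdet, Real.log_mul (by positivity) (ne_of_gt hG)]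
    congr 1
    rw [← sq_abs, Real.log_pow, Finset.abs_prod,
      Real.log_prod (fun j _ => abs_ne_zero.2 (hc j))]
    push_cast; ring
  -- column norm part
  have hcol : ∀ j, Real.log (Real.sqrt (∑ r, (J r j) ^ 2)) =
      Real.log |c j| + Real.log (Real.sqrt (∑ r, (A r (σ.symm j)) ^ 2)) := by
    intro j
    have h1 : (∑ r, (J r j) ^ 2) = c j ^ 2 * ∑ r, (A r (σ.symm j)) ^ 2 := by
      rw [Finset.mul_sum]
      refine Finset.sum_congr rfl fun r _ => ?_
      rw [hJ]; simp only [Matrix.of_apply]; ring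
    rw [h1, Real.sqrt_mul (sq_nonneg _), Real.sqrt_sq_eq_abs,
      Real.log_mul (abs_ne_zero.2 (hc j)) (ne_of_gt (Real.sqrt_pos.2 (hcolpos _)))]
  have hsum : ∑ j, Real.log (Real.sqrt (∑ r, (J r j) ^ 2)) =
      (∑ j, Real.log |c j|) + ∑ i, Real.log (Real.sqrt (∑ r, (A r i) ^ 2)) := by
    rw [Finset.sum_congr rfl fun j _ => hcol j, Finset.sum_add_distrib]
    congr 1
    exact Equiv.sum_comp σ.symm (fun i => Real.log (Real.sqrt (∑ r, (A r i) ^ 2)))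
  rw [imaContrast, imaContrast, hsum, hlogdet]
  ring

theorem imaContrast_invariant_elementwise_perm {d m : ℕ}
    (f : (Fin d → ℝ) → (Fin m → ℝ)) (hf : Differentiable ℝ f)
    (hrank : ∀ s : Fin d → ℝ,
      LinearIndependent ℝ (fun i : Fin d => fun r : Fin m => jacobianMatrix f s r i))
    (hfun gfun : Fin d → ℝ → ℝ)
    (hdiffh : ∀ i, Differentiable ℝ (hfun i))
    (hdiffg : ∀ i, Differentiable ℝ (gfun i))
    (hderiv : ∀ i x, deriv (hfun i) x ≠ 0)
    (hleft : ∀ i, Function.LeftInverse (gfun i) (hfun i))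
    (hright : ∀ i, Function.RightInverse (gfun i) (hfun i))
    (σ : Equiv.Perm (Fin d)) (s : Fin d → ℝ) :
    imaContrast (jacobianMatrix (fun x => f (fun i => gfun i (x (σ i))))
        (fun i => hfun (σ.symm i) (s (σ.symm i)))) =
      imaContrast (jacobianMatrix f s) := by
  have hkey : ∀ i x, deriv (gfun i) (hfun i x) * deriv (hfun i) x = 1 := by
    intro i x
    have h1 : HasDerivAt (hfun i) (deriv (hfun i) x) x := ((hdiffh i) x).hasDerivAt
    have h2 : HasDerivAt (gfun i) (deriv (gfun i) (hfun i x)) (hfun i x) :=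
      ((hdiffg i) _).hasDerivAt
    have h3 : HasDerivAt (gfun i ∘ hfun i)
        (deriv (gfun i) (hfun i x) * deriv (hfun i) x) x := h2.comp x h1
    have h4 : (gfun i ∘ hfun i) = id := funext (hleft i)
    rw [h4] at h3
    exact h3.unique (hasDerivAt_id x)
  set t : Fin d → ℝ := fun i => hfun (σ.symm i) (s (σ.symm i)) with ht
  have hpt : (fun i => gfun i (t (σ i))) = s := by
    funext i
    have h5 : t (σ i) = hfun i (s i) := by simp [ht]
    rw [h5]
    exact hleft i (s i)
  have hJ : jacobianMatrix (fun x => f (fun i => gfun i (x (σ i)))) t =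
      Matrix.of fun r j =>
        (deriv (gfun (σ.symm j)) (t j)) * (jacobianMatrix f s) r (σ.symm j) := by
    funext r j
    rw [show (Matrix.of fun r j => (deriv (gfun (σ.symm j)) (t j)) *
        (jacobianMatrix f s) r (σ.symm j)) r j =
        (deriv (gfun (σ.symm j)) (t j)) * (jacobianMatrix f s) r (σ.symm j) from rfl,
      ← hpt]
    exact jac_comp f hf gfun hdiffg σ t r j
  rw [hJ]
  exact imaContrast_scale_perm _ (hrank s)
    (fun j => deriv (gfun (σ.symm j)) (t j))
    (fun j => left_ne_zero_of_mul_eq_one (hkey (σ.symm j) (s (σ.symm j)))) σ
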